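/- With d = deg π, let P, Q ∈ 𝔽_𝔭[U,V] be nonzero homogeneous polynomials of total degrees m and n respectively. If P − Q lies in the ideal of 𝔽_𝔭[U,V] generated by φ̄_d − 1, then m ≡ n modulo (q^d − 1)/(q − 1). Equivalently, the corresponding isobaric weights k₁ = (q−1)·m and k₂ = (q−1)·n satisfy k₁ ≡ k₂ modulo q^d − 1. -/

import Mathlib

open MvPolynomial Finset

/-- The isobaric polynomials `φ_d ∈ A[U,V]` (with `A = 𝔽_q[T]`), defined by the recursion
`φ_0 = 1`, `φ_1 = U − T^q·V`, and
`φ_d = φ_{d−1}·(U − T^q·V)^{q^{d−1}} + (T^{q^{d−1}} − T)·φ_{d−2}·(U^q·V)^{q^{d−2}}` for `d ≥ 2`.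
Here `U = X 0`, `V = X 1` and `T = Polynomial.X`. -/
noncomputable def phiPoly (Fq : Type) [Field Fq] (q : ℕ) :
    ℕ → MvPolynomial (Fin 2) (Polynomial Fq)
  | 0 => 1
  | 1 => X 0 - C (Polynomial.X ^ q) * X 1
  | (d + 2) =>
      phiPoly Fq q (d + 1) * (X 0 - C (Polynomial.X ^ q) * X 1) ^ q ^ (d + 1) +
        C (Polynomial.X ^ (q ^ (d + 1)) - Polynomial.X) * phiPoly Fq q d *
          (X 0 ^ q * X 1) ^ q ^ d
/-- With `d = deg π`, let `P, Q ∈ 𝔽_𝔭[U,V]` be nonzero homogeneous polynomials of total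
degrees `m`, `n`.  If `P − Q` lies in the ideal generated by `φ̄_d − 1`, then
`m ≡ n (mod (q^d − 1)/(q − 1))`; equivalently the isobaric weights `k₁ = (q−1)·m` and
`k₂ = (q−1)·n` satisfy `k₁ ≡ k₂ (mod q^d − 1)`. -/

lemma key_cong {K : Type*} [Field K] {F P Q : MvPolynomial (Fin 2) K} {N m n : ℕ}
    (hN : 0 < N) (hF : F.IsHomogeneous N) (hFne : F ≠ 0)
    (hP : P ≠ 0) (hPhom : P.IsHomogeneous m) (hQhom : Q.IsHomogeneous n)
    (hmem : P - Q ∈ Ideal.span {F - 1}) : m ≡ n [MOD N] := by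
  classical
  by_contra hmn
  have hmn' : ¬ m % N = n % N := hmn
  obtain ⟨h, hh⟩ : ∃ h, P - Q = (F - 1) * h := Ideal.mem_span_singleton.mp hmem
  set c : ℕ → MvPolynomial (Fin 2) K := fun j => homogeneousComponent j h with hc
  set D := h.totalDegree with hD
  -- components of h * F
  have hmul : ∀ j, homogeneousComponent j (h * F) =
      if N ≤ j then c (j - N) * F else 0 := by
    intro j
    conv_lhs => rw [← sum_homogeneousComponent h, Finset.sum_mul, map_sum]
    have heach : ∀ i, homogeneousComponent j (c i * F) = if j = i + N then c i * F else 0 := by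
      intro i
      exact homogeneousComponent_of_mem
        ((mem_homogeneousSubmodule _ _).mpr
          ((homogeneousComponent_isHomogeneous i h).mul hF))
    simp only [show ∀ i, homogeneousComponent j (homogeneousComponent i h * F) =
      if j = i + N then c i * F else 0 from heach]
    by_cases hjN : N ≤ j
    · rw [if_pos hjN]
      by_cases hjD : j - N ≤ D
      · rw [Finset.sum_eq_single (j - N)]
        · rw [if_pos (by omega)]
        · intro i _ hi
          rw [if_neg (by omega)]
        · intro hmem'
          exact absurd (Finset.mem_range.mpr (by omega)) hmem'
      · have hz : c (j - N) = 0 := homogeneousComponent_eq_zero _ h (by omega)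
        rw [Finset.sum_eq_zero, hz, zero_mul]
        intro i hi
        rw [Finset.mem_range] at hi
        rw [if_neg (by omega)]
    · rw [if_neg hjN, Finset.sum_eq_zero]
      intro i hi
      rw [if_neg (by omega)]
  -- the component equations
  have hEq : ∀ j, (if j = m then P else 0) - (if j = n then Q else 0) =
      (if N ≤ j then c (j - N) * F else 0) - c j := by
    intro j
    have h2 : homogeneousComponent j (P - Q) = homogeneousComponent j (h * F - h) := by
      rw [hh]; ring_nf
    rw [map_sub, map_sub, hmul j,
      homogeneousComponent_of_mem ((mem_homogeneousSubmodule _ _).mpr hPhom),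
      homogeneousComponent_of_mem ((mem_homogeneousSubmodule _ _).mpr hQhom)] at h2
    exact h2
  -- class of m never hits n
  have hclassn : ∀ j, j % N = m % N → j ≠ n := by
    intro j hj hjn
    exact hmn' (by rw [← hjn, hj])
  -- ascending chain: c (m + t*N) = c m * F ^ t
  have hasc : ∀ t : ℕ, c (m + t * N) = c m * F ^ t := by
    intro t
    induction t with
    | zero => simp
    | succ t ih =>
      have hj := hEq (m + t * N + N)
      set a := m + t * N with ha
      have ham : m ≤ a := Nat.le_add_right _ _
      have hmod : (a + N) % N = m % N := by
        simp [ha, Nat.add_mod, Nat.mul_mod]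
      rw [if_neg (show ¬ a + N = m by omega), if_neg (hclassn _ hmod),
        if_pos (Nat.le_add_left _ _), Nat.add_sub_cancel, sub_zero] at hj
      have : c (a + N) = c a * F := by linear_combination hj
      rw [show m + (t+1) * N = a + N by ring, this, ih, pow_succ, mul_assoc]
  -- c m = 0
  have hcm : c m = 0 := by
    have h0 : c (m + (D + 1) * N) = 0 := by
      apply homogeneousComponent_eq_zero _ h
      have : D + 1 ≤ (D + 1) * N := Nat.le_mul_of_pos_right _ hN
      omega
    rw [hasc (D + 1)] at h0
    exact (mul_eq_zero.mp h0).resolve_right (pow_ne_zero _ hFne)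
  -- descending chain: things below m in the class of m vanish
  have hdesc : ∀ j, j % N = m % N → j < m → c j = 0 := by
    intro j
    induction j using Nat.strong_induction_on with
    | _ j ih =>
      intro hjm hjlt
      have hj := hEq j
      rw [if_neg (by omega), if_neg (hclassn j hjm), sub_zero] at hj
      by_cases hNj : N ≤ j
      · rw [if_pos hNj] at hj
        have hmod : (j - N) % N = m % N := by
          rw [← hjm]
          conv_rhs => rw [← Nat.sub_add_cancel hNj]
          rw [Nat.add_mod_right]
        rw [ih (j - N) (by omega) hmod (by omega), zero_mul] at hj
        linear_combination hj
      · rw [if_neg hNj] at hj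
        linear_combination hj
  -- conclude P = 0
  have hfin := hEq m
  rw [if_pos rfl, if_neg (hclassn m rfl), sub_zero, hcm, sub_zero] at hfin
  by_cases hNm : N ≤ m
  · rw [if_pos hNm] at hfin
    have hmod : (m - N) % N = m % N := by
      conv_rhs => rw [← Nat.sub_add_cancel hNm]
      rw [Nat.add_mod_right]
    rw [hdesc (m - N) hmod (by omega), zero_mul] at hfin
    exact hP hfin
  · rw [if_neg hNm] at hfin
    exact hP hfin

lemma isHomogeneous_of_eq {R σ : Type*} [CommSemiring R] {φ : MvPolynomial σ R} {a b : ℕ}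
    (h : φ.IsHomogeneous a) (hab : a = b) : φ.IsHomogeneous b := hab ▸ h

lemma phiPoly_isHomogeneous (Fq : Type) [Field Fq] (q d : ℕ) :
    (phiPoly Fq q d).IsHomogeneous (∑ i ∈ Finset.range d, q ^ i) := by
  induction d using Nat.strong_induction_on with
  | _ d ih =>
    rcases d with _ | (_ | e)
    · simpa [phiPoly] using isHomogeneous_one (Fin 2) (Polynomial Fq)
    · rw [phiPoly]
      refine isHomogeneous_of_eq ((isHomogeneous_X _ _).sub
        (isHomogeneous_of_eq ((isHomogeneous_C _ _).mul (isHomogeneous_X _ _))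
          (zero_add 1))) (by simp)
    · rw [phiPoly]
      have hL : (X 0 - C (Polynomial.X ^ q) * X (1 : Fin 2) :
          MvPolynomial (Fin 2) (Polynomial Fq)).IsHomogeneous 1 :=
        (isHomogeneous_X _ _).sub
          (isHomogeneous_of_eq ((isHomogeneous_C _ _).mul (isHomogeneous_X _ _)) (by simp))
      have h1 := (ih (e + 1) (by omega)).mul (hL.pow (q ^ (e + 1)))
      have h2 : (C (Polynomial.X ^ q ^ (e + 1) - Polynomial.X) * phiPoly Fq q e *
          ((X 0 : MvPolynomial (Fin 2) (Polynomial Fq)) ^ q * X 1) ^ q ^ e).IsHomogeneous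
          (0 + (∑ i ∈ Finset.range e, q ^ i) + (1 * q + 1) * q ^ e) :=
        ((isHomogeneous_C _ _).mul (ih e (by omega))).mul
          ((((isHomogeneous_X _ _).pow q).mul (isHomogeneous_X _ _)).pow (q ^ e))
      refine (isHomogeneous_of_eq h1 ?_).add (isHomogeneous_of_eq h2 ?_)
      · simp only [Finset.sum_range_succ, pow_succ]; ring
      · simp only [Finset.sum_range_succ, pow_succ]; ring

lemma aeval_map_phiPoly (Fq : Type) [Field Fq] {q : ℕ} (hq : q ≠ 0)
    {S : Type*} [CommRing S] (f : Polynomial Fq →+* S) (d : ℕ) :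
    (MvPolynomial.aeval (R := S) ![(Polynomial.X : Polynomial S), 0])
        (MvPolynomial.map f (phiPoly Fq q d)) = (Polynomial.X : Polynomial S) ^ (∑ i ∈ Finset.range d, q ^ i) := by
  induction d using Nat.strong_induction_on with
  | _ d ih =>
    rcases d with _ | (_ | e)
    · simp [phiPoly]
    · simp [phiPoly, Polynomial.C_eq_algebraMap]
    · rw [phiPoly]
      have h1 := ih (e + 1) (by omega)
      have h2 := ih e (by omega)
      simp only [map_add, map_mul, map_pow, map_sub, MvPolynomial.map_X, MvPolynomial.map_C,
        h1, h2, MvPolynomial.aeval_X, MvPolynomial.aeval_C,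
        Matrix.cons_val_zero, Matrix.cons_val_one, Matrix.head_cons]
      rw [mul_zero, sub_zero, mul_zero, zero_pow (pow_ne_zero e hq), mul_zero, add_zero,
        ← pow_add, ← Finset.sum_range_succ]

theorem degree_congruence_of_sub_mem_span (p r q : ℕ) (hp : p.Prime) (hodd : Odd p)
    (hr : 0 < r) (hq : q = p ^ r)
    (Fq : Type) [Field Fq] [Fintype Fq] (hcard : Fintype.card Fq = q)
    (π : Polynomial Fq) (hmonic : π.Monic) (hirr : Irreducible π)
    (hne : π ≠ Polynomial.X)
    (P Q : MvPolynomial (Fin 2) (Polynomial Fq ⧸ Ideal.span {π})) (m n : ℕ)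
    (hP : P ≠ 0) (hQ : Q ≠ 0) (hPhom : P.IsHomogeneous m) (hQhom : Q.IsHomogeneous n)
    (hmem : P - Q ∈ Ideal.span
      {MvPolynomial.map (Ideal.Quotient.mk (Ideal.span {π})) (phiPoly Fq q π.natDegree)
        - 1}) :
    m ≡ n [MOD ∑ i ∈ Finset.range π.natDegree, q ^ i] ∧
      (q - 1) * m ≡ (q - 1) * n [MOD q ^ π.natDegree - 1] := by
  have hq0 : 0 < q := by subst hq; exact pow_pos hp.pos r
  have hqne : q ≠ 0 := hq0.ne'
  have hd1 : 0 < π.natDegree := hirr.natDegree_pos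
  have hNpos : 0 < ∑ i ∈ Finset.range π.natDegree, q ^ i :=
    Finset.sum_pos (fun i _ => pow_pos hq0 i) (Finset.nonempty_range_iff.mpr (by omega))
  haveI hmax : (Ideal.span {π}).IsMaximal := PrincipalIdealRing.isMaximal_of_irreducible hirr
  letI : Field (Polynomial Fq ⧸ Ideal.span {π}) := Ideal.Quotient.field _
  set F := MvPolynomial.map (Ideal.Quotient.mk (Ideal.span {π})) (phiPoly Fq q π.natDegree)
    with hF
  have hFhom : F.IsHomogeneous (∑ i ∈ Finset.range π.natDegree, q ^ i) :=
    (phiPoly_isHomogeneous Fq q π.natDegree).map _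
  have hFne : F ≠ 0 := by
    intro h0
    have h1 := aeval_map_phiPoly Fq hqne (Ideal.Quotient.mk (Ideal.span {π})) π.natDegree
    rw [← hF, h0, map_zero] at h1
    exact pow_ne_zero _ Polynomial.X_ne_zero h1.symm
  have hcong : m ≡ n [MOD ∑ i ∈ Finset.range π.natDegree, q ^ i] :=
    key_cong hNpos hFhom hFne hP hPhom hQhom hmem
  refine ⟨hcong, ?_⟩
  have hgeom : ∀ j, (q - 1) * ∑ i ∈ Finset.range j, q ^ i = q ^ j - 1 := by
    intro j
    induction j with
    | zero => simp
    | succ k ih =>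
      have h1 : 1 ≤ q ^ k := Nat.one_le_pow _ _ hq0
      have h2 : q ^ k ≤ q * q ^ k := Nat.le_mul_of_pos_left _ hq0
      have h3 : q ^ (k + 1) = q * q ^ k := by rw [pow_succ, mul_comm]
      have h4 : 1 ≤ q * q ^ k := le_trans h1 h2
      rw [Finset.sum_range_succ, Nat.mul_add, ih, Nat.sub_one_mul, h3]
      zify [h1, h2, h4]
      ring
  have h2 := Nat.ModEq.mul_left' (q - 1) hcong
  rwa [hgeom π.natDegree] at h2
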